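/- Let K ≥ 1, let r_1 < r_2 < ... < r_K be positive reals and b_1, ..., b_K positive reals with b_1 + ... + b_K = K and b_n < K for all n. Define ã_K = (2^{b_K r_K} - 1)/(2^{K r_K} - 1) and for n < K, ã_n = (2^{b_n r_n} - 1)/(2^{K r_n} - 1) + ((2^{b_n r_n} - 1)/2^{b_n r_n}) · ∑_{l=n+1}^K [(2^{b_l r_l} - 1)/(2^{K r_l} - 1)] · ∏_{k=n}^{l-1} 2^{b_k r_k}. Then ∑_{n=1}^K ã_n < 1 whenever K ≥ 2. -/

import Mathlib

lemma stmt7_chord {θ s t : ℝ} (hθ0 : 0 < θ) (hθ1 : θ < 1) (h1 : 1 < s) (hst : s < t) :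
    (t ^ θ - 1) / (t - 1) < (s ^ θ - 1) / (s - 1) := by
  have h1t : 1 < t := h1.trans hst
  have hs1 : (0:ℝ) < s - 1 := by linarith
  have ht1 : (0:ℝ) < t - 1 := by linarith
  have hconc := Real.strictConcaveOn_rpow hθ0 hθ1
  have ha : (0:ℝ) < (t - s) / (t - 1) := by
    apply div_pos <;> linarith
  have hb : (0:ℝ) < (s - 1) / (t - 1) := div_pos hs1 ht1
  have hab : (t - s) / (t - 1) + (s - 1) / (t - 1) = 1 := by
    field_simp
    ring
  have hne : (1:ℝ) ≠ t := by linarith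
  have hkey := hconc.2 (Set.mem_Ici.mpr (by norm_num : (0:ℝ) ≤ 1))
    (Set.mem_Ici.mpr (by linarith : (0:ℝ) ≤ t)) hne ha hb hab
  simp only [smul_eq_mul, Real.one_rpow, mul_one] at hkey
  have hcomb : (t - s) / (t - 1) + (s - 1) / (t - 1) * t = s := by
    field_simp; ring
  rw [hcomb] at hkey
  rw [div_lt_div_iff₀ ht1 hs1]
  have hkey2 : (t - s) + (s - 1) * t ^ θ < s ^ θ * (t - 1) := by
    have := (div_lt_iff₀ ht1).mp (by
      have e : ((t - s) + (s - 1) * t ^ θ) / (t - 1)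
          = (t - s) / (t - 1) + (s - 1) / (t - 1) * t ^ θ := by ring
      rw [e]; exact hkey)
    linarith
  nlinarith [hkey2]

noncomputable def stmt7G (K : ℕ) (r b : ℕ → ℝ) (m : ℕ) : ℝ :=
  ∑ l ∈ Finset.Icc m K,
    (((2 : ℝ) ^ (b l * r l) - 1) / ((2 : ℝ) ^ ((K : ℝ) * r l) - 1)) *
      ∏ k ∈ Finset.Icc m (l - 1), (2 : ℝ) ^ (b k * r k)

noncomputable def stmt7B (K : ℕ) (r b : ℕ → ℝ) (m : ℕ) : ℝ :=
  ((2 : ℝ) ^ (((K : ℝ) - ∑ k ∈ Finset.Icc 1 (m - 1), b k) * r m) - 1) /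
    ((2 : ℝ) ^ ((K : ℝ) * r m) - 1)

theorem stmt_7 (K : ℕ) (hK : 2 ≤ K) (r b : ℕ → ℝ)
    (hr : ∀ n ∈ Finset.Icc 1 K, 0 < r n)
    (hrmono : ∀ m ∈ Finset.Icc 1 K, ∀ n ∈ Finset.Icc 1 K, m < n → r m < r n)
    (hb : ∀ n ∈ Finset.Icc 1 K, 0 < b n)
    (hbK : ∀ n ∈ Finset.Icc 1 K, b n < (K : ℝ))
    (hbsum : ∑ n ∈ Finset.Icc 1 K, b n = (K : ℝ))
    (atil : ℕ → ℝ)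
    (hatilK : atil K = ((2 : ℝ) ^ (b K * r K) - 1) / ((2 : ℝ) ^ ((K : ℝ) * r K) - 1))
    (hatil : ∀ n : ℕ, 1 ≤ n → n < K →
      atil n = ((2 : ℝ) ^ (b n * r n) - 1) / ((2 : ℝ) ^ ((K : ℝ) * r n) - 1) +
        (((2 : ℝ) ^ (b n * r n) - 1) / (2 : ℝ) ^ (b n * r n)) *
          ∑ l ∈ Finset.Icc (n + 1) K,
            (((2 : ℝ) ^ (b l * r l) - 1) / ((2 : ℝ) ^ ((K : ℝ) * r l) - 1)) *
              ∏ k ∈ Finset.Icc n (l - 1), (2 : ℝ) ^ (b k * r k)) :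
    ∑ n ∈ Finset.Icc 1 K, atil n < 1 := by
  have hKpos : (0:ℝ) < (K:ℝ) := by positivity
  have hcpos : ∀ n, (0:ℝ) < (2:ℝ) ^ (b n * r n) := fun n => Real.rpow_pos_of_pos two_pos _
  have hgpos : ∀ n ∈ Finset.Icc 1 K, (0:ℝ) < (2:ℝ) ^ ((K:ℝ) * r n) - 1 := by
    intro n hn
    have h1 : (1:ℝ) < (2:ℝ) ^ ((K:ℝ) * r n) := by
      apply (Real.one_lt_rpow_iff_of_pos two_pos).mpr
      exact Or.inl ⟨one_lt_two, by have := hr n hn; positivity⟩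
    linarith
  -- splitting lemma for Icc sums/products at the bottom
  have hsplit : ∀ m M : ℕ, m ≤ M → Finset.Icc m M = insert m (Finset.Icc (m+1) M) := by
    intro m M hmM
    ext x
    simp only [Finset.mem_Icc, Finset.mem_insert]
    omega
  have hnotmem : ∀ m M : ℕ, m ∉ Finset.Icc (m+1) M := by
    intro m M; simp
  -- factoring c m out of the inner product, for l ∈ Icc (m+1) K
  have hprodfac : ∀ m, 1 ≤ m → ∀ l ∈ Finset.Icc (m+1) K,
      (∏ k ∈ Finset.Icc m (l - 1), (2:ℝ) ^ (b k * r k))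
        = (2:ℝ) ^ (b m * r m) * ∏ k ∈ Finset.Icc (m+1) (l - 1), (2:ℝ) ^ (b k * r k) := by
    intro m hm l hl
    simp only [Finset.mem_Icc] at hl
    rw [hsplit m (l-1) (by omega), Finset.prod_insert (hnotmem m (l-1))]
  -- the inner sum in hatil equals c m * stmt7G (m+1)
  have hinner : ∀ m, 1 ≤ m → m < K →
      (∑ l ∈ Finset.Icc (m + 1) K,
        (((2 : ℝ) ^ (b l * r l) - 1) / ((2 : ℝ) ^ ((K : ℝ) * r l) - 1)) *
          ∏ k ∈ Finset.Icc m (l - 1), (2 : ℝ) ^ (b k * r k))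
      = (2:ℝ) ^ (b m * r m) * stmt7G K r b (m+1) := by
    intro m hm hmK
    rw [stmt7G, Finset.mul_sum]
    apply Finset.sum_congr rfl
    intro l hl
    rw [hprodfac m hm l hl]; ring
  -- recursion for G
  have hGrec : ∀ m, 1 ≤ m → m < K →
      stmt7G K r b m = ((2:ℝ) ^ (b m * r m) - 1) / ((2:ℝ) ^ ((K:ℝ) * r m) - 1)
        + (2:ℝ) ^ (b m * r m) * stmt7G K r b (m+1) := by
    intro m hm hmK
    rw [stmt7G, hsplit m K (by omega), Finset.sum_insert (hnotmem m K)]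
    have hempty : Finset.Icc m (m-1) = ∅ := Finset.Icc_eq_empty (by omega)
    rw [hempty, Finset.prod_empty, mul_one]
    congr 1
    exact hinner m hm hmK
  -- atil in terms of G
  have hatilG : ∀ m, 1 ≤ m → m < K →
      atil m = ((2:ℝ) ^ (b m * r m) - 1) / ((2:ℝ) ^ ((K:ℝ) * r m) - 1)
        + ((2:ℝ) ^ (b m * r m) - 1) * stmt7G K r b (m+1) := by
    intro m hm hmK
    rw [hatil m hm hmK, hinner m hm hmK]
    have hc := hcpos m
    field_simp
  -- G at K
  have hGK : stmt7G K r b K = atil K := by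
    rw [stmt7G, Finset.Icc_self, Finset.sum_singleton,
      Finset.Icc_eq_empty (by omega : ¬ K ≤ K - 1), Finset.prod_empty, mul_one, hatilK]
  -- telescoping sum
  have hsum : ∀ d, d < K → ∑ n ∈ Finset.Icc (K-d) K, atil n = stmt7G K r b (K-d) := by
    intro d
    induction d with
    | zero =>
      intro _
      simp only [Nat.sub_zero, Finset.Icc_self, Finset.sum_singleton]
      exact hGK.symm
    | succ d ih =>
      intro hd
      have hm1 : 1 ≤ K - (d+1) := by omega
      have hmK : K - (d+1) < K := by omega
      have hms : K - (d+1) + 1 = K - d := by omega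
      rw [hsplit (K-(d+1)) K (by omega), Finset.sum_insert (hnotmem _ K), hms,
        ih (by omega), hGrec (K-(d+1)) hm1 hmK, hatilG (K-(d+1)) hm1 hmK, hms]
      ring
  -- partial sums of b
  have hbsplit : ∀ m, m ≤ K →
      (∑ k ∈ Finset.Icc 1 m, b k) + ∑ k ∈ Finset.Icc (m+1) K, b k = (K:ℝ) := by
    intro m hm
    rw [← hbsum]
    rw [← Finset.sum_union]
    · congr 1
      ext x
      simp only [Finset.mem_union, Finset.mem_Icc]
      omega
    · rw [Finset.disjoint_left]
      intro x hx hx'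
      simp only [Finset.mem_Icc] at hx hx'
      omega
  have hSsucc : ∀ m, 1 ≤ m →
      (∑ k ∈ Finset.Icc 1 m, b k) = (∑ k ∈ Finset.Icc 1 (m-1), b k) + b m := by
    intro m hm
    have h : m - 1 + 1 = m := by omega
    calc (∑ k ∈ Finset.Icc 1 m, b k) = ∑ k ∈ Finset.Icc 1 (m-1+1), b k := by rw [h]
      _ = (∑ k ∈ Finset.Icc 1 (m-1), b k) + b (m-1+1) :=
          Finset.sum_Icc_succ_top (by omega) _
      _ = (∑ k ∈ Finset.Icc 1 (m-1), b k) + b m := by rw [h]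
  -- main bound by downward induction
  have hbound : ∀ d, d < K → stmt7G K r b (K-d) ≤ stmt7B K r b (K-d)
      ∧ (0 < d → stmt7G K r b (K-d) < stmt7B K r b (K-d)) := by
    intro d
    induction d with
    | zero =>
      intro _
      constructor
      · simp only [Nat.sub_zero]
        rw [hGK, hatilK, stmt7B]
        have hSK : ((K:ℝ) - ∑ k ∈ Finset.Icc 1 (K-1), b k) = b K := by
          have h1 := hSsucc K (by omega)
          have h2 := hbsum
          linarith
        rw [hSK]
      · intro h; exact absurd h (by omega)
    | succ d ih =>
      intro hd
      set m := K - (d+1) with hmdef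
      have hm1 : 1 ≤ m := by omega
      have hmK : m < K := by omega
      have hms : m + 1 = K - d := by omega
      have hmmem : m ∈ Finset.Icc 1 K := by simp only [Finset.mem_Icc]; omega
      have hm1mem : m + 1 ∈ Finset.Icc 1 K := by simp only [Finset.mem_Icc]; omega
      have ihle : stmt7G K r b (m+1) ≤ stmt7B K r b (m+1) := by
        rw [hms]; exact (ih (by omega)).1
      -- set up chord application
      set Sm := ∑ k ∈ Finset.Icc 1 m, b k with hSm
      have hSmpos : 0 < Sm := by
        apply Finset.sum_pos
        · intro k hk
          apply hb
          simp only [Finset.mem_Icc] at hk ⊢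
          omega
        · exact ⟨1, by simp only [Finset.mem_Icc]; omega⟩
      have hSmlt : Sm < (K:ℝ) := by
        have h := hbsplit m (by omega)
        have hpos : 0 < ∑ k ∈ Finset.Icc (m+1) K, b k := by
          apply Finset.sum_pos
          · intro k hk
            apply hb
            simp only [Finset.mem_Icc] at hk ⊢
            omega
          · exact ⟨m+1, by simp only [Finset.mem_Icc]; omega⟩
        linarith
      have hrm : 0 < r m := hr m hmmem
      have hrm1 : 0 < r (m+1) := hr (m+1) hm1mem
      have hrlt : r m < r (m+1) := hrmono m hmmem (m+1) hm1mem (by omega)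
      set θ : ℝ := ((K:ℝ) - Sm) / (K:ℝ) with hθ
      have hθ0 : 0 < θ := by apply div_pos <;> linarith
      have hθ1 : θ < 1 := by
        rw [div_lt_one hKpos]; linarith
      set s : ℝ := (2:ℝ) ^ ((K:ℝ) * r m) with hs
      set t : ℝ := (2:ℝ) ^ ((K:ℝ) * r (m+1)) with ht
      have h1s : 1 < s := by
        apply (Real.one_lt_rpow_iff_of_pos two_pos).mpr
        exact Or.inl ⟨one_lt_two, by positivity⟩
      have hst : s < t := by
        rw [hs, ht]
        apply Real.rpow_lt_rpow_left_iff (x := (2:ℝ)) one_lt_two |>.mpr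
        have := mul_lt_mul_of_pos_left hrlt hKpos
        linarith
      have hchord := stmt7_chord hθ0 hθ1 h1s hst
      have hKne : (K:ℝ) ≠ 0 := ne_of_gt hKpos
      have hsθ : s ^ θ = (2:ℝ) ^ (((K:ℝ) - Sm) * r m) := by
        rw [hs, ← Real.rpow_mul (by norm_num : (0:ℝ) ≤ 2)]
        congr 1
        rw [hθ]
        field_simp
      have htθ : t ^ θ = (2:ℝ) ^ (((K:ℝ) - Sm) * r (m+1)) := by
        rw [ht, ← Real.rpow_mul (by norm_num : (0:ℝ) ≤ 2)]
        congr 1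
        rw [hθ]
        field_simp
      have hBm1 : stmt7B K r b (m+1) = (t ^ θ - 1) / (t - 1) := by
        rw [stmt7B]
        simp only [Nat.add_sub_cancel]
        rw [← hSm, ← htθ, ← ht]
      have hgm : (0:ℝ) < s - 1 := by linarith
      have hcm : (0:ℝ) < (2:ℝ) ^ (b m * r m) := hcpos m
      -- combine
      have hGm : stmt7G K r b m < stmt7B K r b m := by
        have hrec := hGrec m hm1 hmK
        rw [← hs] at hrec
        have step1 : (2:ℝ) ^ (b m * r m) * stmt7G K r b (m+1)
            < (2:ℝ) ^ (b m * r m) * ((s ^ θ - 1) / (s - 1)) := by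
          apply mul_lt_mul_of_pos_left _ hcm
          calc stmt7G K r b (m+1) ≤ stmt7B K r b (m+1) := ihle
            _ = (t ^ θ - 1) / (t - 1) := hBm1
            _ < (s ^ θ - 1) / (s - 1) := hchord
        have heq : ((2:ℝ) ^ (b m * r m) - 1) / (s - 1)
            + (2:ℝ) ^ (b m * r m) * ((s ^ θ - 1) / (s - 1)) = stmt7B K r b m := by
          rw [stmt7B, ← hs, hsθ]
          have h2 : ((K:ℝ) - ∑ k ∈ Finset.Icc 1 (m-1), b k) = b m + ((K:ℝ) - Sm) := by
            have h3 := hSsucc m hm1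
            rw [hSm, h3]
            ring
          rw [h2]
          have hexp : (2:ℝ) ^ ((b m + ((K:ℝ) - Sm)) * r m)
              = (2:ℝ) ^ (b m * r m) * (2:ℝ) ^ (((K:ℝ) - Sm) * r m) := by
            rw [← Real.rpow_add two_pos]
            congr 1
            ring
          rw [hexp]
          field_simp
          ring
        rw [hrec]
        linarith [step1, heq]
      exact ⟨le_of_lt hGm, fun _ => hGm⟩
  -- conclude
  have h1K : K - (K-1) = 1 := by omega
  have hfinal := (hbound (K-1) (by omega)).2 (by omega)
  rw [h1K] at hfinal
  have hsum1 := hsum (K-1) (by omega)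
  rw [h1K] at hsum1
  rw [hsum1]
  have hB1 : stmt7B K r b 1 = 1 := by
    rw [stmt7B]
    norm_num
    intro h
    have := hgpos 1 (by simp only [Finset.mem_Icc]; omega)
    linarith
  rw [hB1] at hfinal
  exact hfinal
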